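/- arXiv:2602.05076 — 2 statements merged into one kernel-verified Lean document; each statement's English description precedes it below -/
import Mathlib

section
/- The set of minimal monomial generators of E_q^{(2)} equals {f_X : ∅ ≠ X ⊆ [q]}, where f_X = (∏_{X⊆A} y_A^2)(∏_{X∩A ≠ ∅, X∩([q]\A) ≠ ∅} y_A). Consequently sdefect(2, E_q) = μ(E_q^{(2)}/E_q^2) = 2^q − 1 − q − C(q,2), since f_X ∈ E_q^2 if and only if |X| ≤ 2. -/
open MvPolynomial

/-- Index type: nonempty subsets of `[q]`. -/
abbrev EIdx (q : ℕ) := {A : Finset (Fin q) // A.Nonempty}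

/-- The generator `ε_i = ∏_{A ∋ i} y_A` of the extremal ideal. -/
noncomputable def extGen (k : Type*) [Field k] (q : ℕ) (i : Fin q) :
    MvPolynomial (EIdx q) k :=
  ∏ A : EIdx q, if i ∈ A.1 then X A else 1

/-- The `q`-extremal ideal `E_q = (ε_1, …, ε_q)`. -/
noncomputable def extIdeal (k : Type*) [Field k] (q : ℕ) :
    Ideal (MvPolynomial (EIdx q) k) :=
  Ideal.span (Set.range (extGen k q))

/-- The `r`-th symbolic power of a square-free monomial ideal: the intersection
of the `r`-th powers of its minimal primes. -/
def symbPow {R : Type*} [CommRing R] (I : Ideal R) (r : ℕ) : Ideal R :=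
  ⨅ P ∈ I.minimalPrimes, P ^ r

/-- The monomial `y^b = ∏_A y_A^{b_A}`. -/
noncomputable def ymon (k : Type*) [Field k] (q : ℕ) (b : EIdx q → ℕ) :
    MvPolynomial (EIdx q) k :=
  ∏ A : EIdx q, X A ^ b A

/-- `f_X = (∏_{X ⊆ A} y_A²) (∏_{X∩A ≠ ∅, X∩Aᶜ ≠ ∅} y_A)`. -/
noncomputable def fMon (k : Type*) [Field k] (q : ℕ) (Xs : Finset (Fin q)) :
    MvPolynomial (EIdx q) k :=
  (∏ A : EIdx q, if Xs ⊆ A.1 then X A ^ 2 else 1) *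
    (∏ A : EIdx q,
      if (Xs ∩ A.1).Nonempty ∧ (Xs ∩ A.1ᶜ).Nonempty then X A else 1)

namespace Stmt18

variable {k : Type*} [Field k] {q : ℕ}

noncomputable def toF (b : EIdx q → ℕ) : EIdx q →₀ ℕ := Finsupp.equivFunOnFinite.symm b

@[simp] lemma toF_apply (b : EIdx q → ℕ) (A : EIdx q) : toF b A = b A := rfl

lemma toF_inj {b b' : EIdx q → ℕ} (h : toF b = toF b') : b = b' :=
  Finsupp.equivFunOnFinite.symm.injective h

lemma prod_monomial_one {σ ι : Type*} {kk : Type*} [Field kk] (s : Finset ι) (g : ι → (σ →₀ ℕ)) :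
    (∏ i ∈ s, monomial (g i) (1 : kk)) = monomial (∑ i ∈ s, g i) 1 := by
  classical
  induction s using Finset.cons_induction with
  | empty => simp
  | cons a s ha ih => rw [Finset.prod_cons, ih, Finset.sum_cons, monomial_mul, one_mul]

lemma ymon_eq (b : EIdx q → ℕ) : ymon k q b = monomial (toF b) 1 := by
  rw [ymon]
  simp only [X_pow_eq_monomial]
  rw [prod_monomial_one]
  exact congrArg (fun d => monomial d (1:k)) (Finsupp.univ_sum_single (toF b))

lemma ymon_inj {b b' : EIdx q → ℕ} (h : ymon k q b = ymon k q b') : b = b' := by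
  rw [ymon_eq, ymon_eq] at h
  have h2 := congrArg (coeff (toF b)) h
  rw [coeff_monomial, coeff_monomial, if_pos rfl] at h2
  by_cases he : toF b' = toF b
  · exact (toF_inj he.symm)
  · rw [if_neg he] at h2; exact absurd h2 one_ne_zero

lemma mem_span_monomial_iff {σ : Type*} (s : Set (σ →₀ ℕ)) (d : σ →₀ ℕ) :
    monomial d (1 : k) ∈ Ideal.span ((fun c => monomial c (1 : k)) '' s) ↔ ∃ c ∈ s, c ≤ d := by
  classical
  constructor
  · intro hd
    let J : Ideal (MvPolynomial σ k) :=
      { carrier := {f | ∀ e ∈ f.support, ∃ c ∈ s, c ≤ e}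
        zero_mem' := by simp
        add_mem' := by
          intro f g hf hg e he
          rcases Finset.mem_union.mp (MvPolynomial.support_add he) with h | h
          · exact hf e h
          · exact hg e h
        smul_mem' := by
          intro p f hf e he
          rw [smul_eq_mul] at he
          obtain ⟨e1, he1, e2, he2, rfl⟩ := Finset.mem_add.mp (MvPolynomial.support_mul p f he)
          obtain ⟨c, hc, hce⟩ := hf e2 he2
          exact ⟨c, hc, hce.trans (le_add_self)⟩ }
    have hJ : Ideal.span ((fun c => monomial c (1 : k)) '' s) ≤ J := by
      rw [Ideal.span_le]
      rintro _ ⟨c, hc, rfl⟩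
      intro e he
      rw [support_monomial, if_neg (one_ne_zero : (1:k) ≠ 0)] at he
      rw [Finset.mem_singleton] at he
      exact ⟨c, hc, he ▸ le_refl c⟩
    have hdm : d ∈ (monomial d (1:k)).support := by
      rw [mem_support_iff, coeff_monomial, if_pos rfl]
      exact one_ne_zero
    exact hJ hd d hdm
  · rintro ⟨c, hc, hcd⟩
    have : monomial d (1:k) = monomial c 1 * monomial (d - c) 1 := by
      rw [monomial_mul, one_mul, add_tsub_cancel_of_le hcd]
    rw [this]
    exact Ideal.mul_mem_right _ _ (Ideal.subset_span ⟨c, hc, rfl⟩)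


section PC
variable (k) (q)

/-- `C` is a set cover of `[q]`. -/
def Cov (C : Finset (EIdx q)) : Prop := ∀ i : Fin q, ∃ A ∈ C, i ∈ A.1

/-- The prime ideal generated by the variables indexed by `C`. -/
noncomputable def PC (C : Finset (EIdx q)) : Ideal (MvPolynomial (EIdx q) k) :=
  Ideal.span ((fun A => (X A : MvPolynomial (EIdx q) k)) '' (C : Set (EIdx q)))

variable {k q}

lemma monomial_mem_PC {C : Finset (EIdx q)} {d : EIdx q →₀ ℕ} (c : k)
    (h : ∃ A ∈ C, d A ≠ 0) : monomial d c ∈ PC k q C := by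
  obtain ⟨A, hAC, hdA⟩ := h
  have hle : Finsupp.single A 1 ≤ d := Finsupp.single_le_iff.mpr (Nat.one_le_iff_ne_zero.mpr hdA)
  have : monomial d c = X A * monomial (d - Finsupp.single A 1) c := by
    rw [show (X A : MvPolynomial (EIdx q) k) = monomial (Finsupp.single A 1) 1 by
      rw [← X_pow_eq_monomial, pow_one], monomial_mul, one_mul,
      add_tsub_cancel_of_le hle]
  rw [this]
  exact Ideal.mul_mem_right _ _ (Ideal.subset_span ⟨A, hAC, rfl⟩)

lemma mem_PC_of_support {C : Finset (EIdx q)} {f : MvPolynomial (EIdx q) k}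
    (h : ∀ d ∈ f.support, ∃ A ∈ C, d A ≠ 0) : f ∈ PC k q C := by
  have h2 : f = ∑ d ∈ f.support, monomial d (coeff d f) := f.as_sum
  rw [h2]
  exact Ideal.sum_mem _ fun d hd => monomial_mem_PC _ (h d hd)

variable (k q) in
/-- Kill the variables in `C`. -/
noncomputable def phiC (C : Finset (EIdx q)) :
    MvPolynomial (EIdx q) k →ₐ[k] MvPolynomial (EIdx q) k :=
  aeval (fun A => if A ∈ C then 0 else X A)

lemma phiC_monomial (C : Finset (EIdx q)) (d : EIdx q →₀ ℕ) (c : k) :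
    phiC k q C (monomial d c) = if ∀ A ∈ C, d A = 0 then monomial d c else 0 := by
  classical
  rw [phiC, aeval_monomial]
  by_cases h : ∀ A ∈ C, d A = 0
  · rw [if_pos h]
    have he : (d.prod fun A e => (if A ∈ C then 0 else X A : MvPolynomial (EIdx q) k) ^ e)
        = d.prod fun A e => (X A : MvPolynomial (EIdx q) k) ^ e := by
      apply Finsupp.prod_congr
      intro A hA
      rw [if_neg fun hAC => (Finsupp.mem_support_iff.mp hA) (h A hAC)]
    rw [he, algebraMap_eq, ← monomial_eq]
  · rw [if_neg h]
    push_neg at h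
    obtain ⟨A, hAC, hdA⟩ := h
    have he : (d.prod fun A e => (if A ∈ C then 0 else X A : MvPolynomial (EIdx q) k) ^ e) = 0 := by
      apply Finset.prod_eq_zero (Finsupp.mem_support_iff.mpr hdA)
      show (if A ∈ C then 0 else X A : MvPolynomial (EIdx q) k) ^ d A = 0
      rw [if_pos hAC]
      exact zero_pow hdA
    rw [he, mul_zero]

lemma PC_eq_ker (C : Finset (EIdx q)) : PC k q C = RingHom.ker (phiC k q C) := by
  classical
  apply le_antisymm
  · rw [PC, Ideal.span_le]
    rintro _ ⟨A, hA, rfl⟩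
    have : phiC k q C (X A) = 0 := by rw [phiC, aeval_X, if_pos (Finset.mem_coe.mp hA)]
    simpa [RingHom.mem_ker] using this
  · intro f hf
    rw [RingHom.mem_ker] at hf
    have h1 : phiC k q C f
        = ∑ d ∈ f.support.filter (fun d => ∀ A ∈ C, d A = 0), monomial d (coeff d f) := by
      conv_lhs => rw [f.as_sum, map_sum]
      rw [Finset.sum_filter]
      exact Finset.sum_congr rfl fun d _ => phiC_monomial C d (coeff d f)
    have h2 : f = (∑ d ∈ f.support.filter (fun d => ¬ ∀ A ∈ C, d A = 0), monomial d (coeff d f))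
        + phiC k q C f := by
      rw [h1, add_comm]
      conv_lhs => rw [f.as_sum]
      exact (Finset.sum_filter_add_sum_filter_not f.support _ _).symm
    rw [hf, add_zero] at h2
    rw [h2]
    apply Ideal.sum_mem
    intro d hd
    rw [Finset.mem_filter] at hd
    push_neg at hd
    exact monomial_mem_PC _ hd.2

lemma PC_isPrime (C : Finset (EIdx q)) : (PC k q C).IsPrime := by
  rw [PC_eq_ker]
  exact RingHom.ker_isPrime _

lemma ymon_mem_PC_sq_iff (b : EIdx q → ℕ) (C : Finset (EIdx q)) :
    ymon k q b ∈ (PC k q C) ^ 2 ↔ 2 ≤ ∑ A ∈ C, b A := by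
  classical
  have hPC2 : (PC k q C) ^ 2 = Ideal.span ((fun c => monomial c (1 : k)) ''
      {c | ∃ A ∈ C, ∃ B ∈ C, c = Finsupp.single A 1 + Finsupp.single B 1}) := by
    rw [pow_two, PC, Ideal.span_mul_span']
    congr 1
    ext f
    have hX : ∀ D : EIdx q, (X D : MvPolynomial (EIdx q) k) = monomial (Finsupp.single D 1) 1 :=
      fun D => by rw [← X_pow_eq_monomial, pow_one]
    constructor
    · rintro ⟨_, ⟨A, hA, rfl⟩, _, ⟨B, hB, rfl⟩, rfl⟩
      refine ⟨Finsupp.single A 1 + Finsupp.single B 1,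
        ⟨A, Finset.mem_coe.mp hA, B, Finset.mem_coe.mp hB, rfl⟩, ?_⟩
      show monomial (Finsupp.single A 1 + Finsupp.single B 1) (1 : k) = X A * X B
      rw [hX A, hX B, monomial_mul, one_mul]
    · rintro ⟨c, ⟨A, hA, B, hB, rfl⟩, rfl⟩
      refine ⟨X A, ⟨A, Finset.mem_coe.mpr hA, rfl⟩, X B, ⟨B, Finset.mem_coe.mpr hB, rfl⟩, ?_⟩
      show X A * X B = monomial (Finsupp.single A 1 + Finsupp.single B 1) (1 : k)
      rw [hX A, hX B, monomial_mul, one_mul]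
  rw [ymon_eq, hPC2, mem_span_monomial_iff]
  constructor
  · rintro ⟨c, ⟨A, hA, B, hB, rfl⟩, hle⟩
    have hAle := hle A
    have hBle := hle B
    simp only [Finsupp.add_apply, Finsupp.single_apply, toF_apply] at hAle hBle
    simp at hAle hBle
    by_cases hAB : A = B
    · subst hAB
      have h2 : 2 ≤ b A := by simpa using hAle
      calc 2 ≤ b A := h2
        _ ≤ ∑ A' ∈ C, b A' := Finset.single_le_sum (fun _ _ => Nat.zero_le _) hA
    · have h1 : 1 ≤ b A := by split_ifs at hAle <;> omega
      have h2 : 1 ≤ b B := by split_ifs at hBle <;> omega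
      have hsub : ({A, B} : Finset (EIdx q)) ⊆ C := by
        intro x hx; rcases Finset.mem_insert.mp hx with rfl | hx
        · exact hA
        · rw [Finset.mem_singleton] at hx; subst hx; exact hB
      have hps := Finset.sum_le_sum_of_subset (f := b) hsub
      rw [Finset.sum_pair hAB] at hps
      omega
  · intro hsum
    by_cases hA2 : ∃ A ∈ C, 2 ≤ b A
    · obtain ⟨A, hA, h2⟩ := hA2
      refine ⟨Finsupp.single A 1 + Finsupp.single A 1, ⟨A, hA, A, hA, rfl⟩, ?_⟩
      intro B
      simp only [Finsupp.add_apply, Finsupp.single_apply, toF_apply]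
      by_cases hB : A = B
      · subst hB; simpa using h2
      · simp [hB]
    · push_neg at hA2
      have h1 : ∃ A ∈ C, 1 ≤ b A := by
        by_contra h; push_neg at h
        have : ∑ A ∈ C, b A = 0 := Finset.sum_eq_zero (fun A hA => by have := h A hA; omega)
        omega
      obtain ⟨A, hAC, hA1⟩ := h1
      have herase := Finset.sum_erase_add C b hAC
      have h2 : ∃ B ∈ C.erase A, 1 ≤ b B := by
        by_contra h; push_neg at h
        have : ∑ B ∈ C.erase A, b B = 0 :=
          Finset.sum_eq_zero (fun B hB => by have := h B hB; omega)
        have := hA2 A hAC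
        omega
      obtain ⟨B, hB, hB1⟩ := h2
      have hBA : B ≠ A := (Finset.mem_erase.mp hB).1
      refine ⟨Finsupp.single A 1 + Finsupp.single B 1,
        ⟨A, hAC, B, (Finset.mem_erase.mp hB).2, rfl⟩, ?_⟩
      intro D
      simp only [Finsupp.add_apply, Finsupp.single_apply, toF_apply]
      by_cases hD1 : A = D
      · subst hD1; simp [hBA]; omega
      · by_cases hD2 : B = D
        · subst hD2; simpa [hD1] using hB1
        · simp [hD1, hD2]

end PC


section Symb
variable {k : Type*} [Field k] {q : ℕ}

/-- exponent vector of ε_i -/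
def eb (q : ℕ) (i : Fin q) (A : EIdx q) : ℕ := if i ∈ A.1 then 1 else 0

lemma extGen_eq_ymon (i : Fin q) : extGen k q i = ymon k q (eb q i) := by
  rw [extGen, ymon]
  apply Finset.prod_congr rfl
  intro A _
  rw [eb]
  split <;> simp

lemma extIdeal_le_PC {C : Finset (EIdx q)} (hC : Cov q C) : extIdeal k q ≤ PC k q C := by
  rw [extIdeal, Ideal.span_le]
  rintro _ ⟨i, rfl⟩
  obtain ⟨A, hAC, hiA⟩ := hC i
  have hdvd : (X A : MvPolynomial (EIdx q) k) ∣ extGen k q i := by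
    have h := Finset.dvd_prod_of_mem
      (fun A : EIdx q => if i ∈ A.1 then (X A : MvPolynomial (EIdx q) k) else 1)
      (Finset.mem_univ A)
    simpa [hiA, extGen] using h
  obtain ⟨g, hg⟩ := hdvd
  rw [SetLike.mem_coe, hg]
  exact Ideal.mul_mem_right _ _ (Ideal.subset_span ⟨A, Finset.mem_coe.mpr hAC, rfl⟩)

lemma mem_symbPow_iff (b : EIdx q → ℕ) :
    ymon k q b ∈ symbPow (extIdeal k q) 2 ↔ ∀ C : Finset (EIdx q), Cov q C → 2 ≤ ∑ A ∈ C, b A := by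
  rw [symbPow]
  simp only [Submodule.mem_iInf]
  constructor
  · intro h C hC
    haveI : (PC k q C).IsPrime := PC_isPrime C
    obtain ⟨P, hP, hPle⟩ := Ideal.exists_minimalPrimes_le (extIdeal_le_PC (k := k) hC)
    have hm := Ideal.pow_right_mono hPle 2 (h P hP)
    exact (ymon_mem_PC_sq_iff b C).mp hm
  · intro h P hP
    have hprime : P.IsPrime := hP.1.1
    have hle : extIdeal k q ≤ P := hP.1.2
    have hcov : ∀ i : Fin q, ∃ A : EIdx q, i ∈ A.1 ∧ X A ∈ P := by
      intro i
      have hi : extGen k q i ∈ P := hle (Ideal.subset_span ⟨i, rfl⟩)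
      rw [extGen] at hi
      obtain ⟨A, -, hA⟩ := (Ideal.IsPrime.prod_mem_iff (hp := hprime)).mp hi
      by_cases hiA : i ∈ A.1
      · exact ⟨A, hiA, by rwa [if_pos hiA] at hA⟩
      · rw [if_neg hiA] at hA
        exact absurd (P.eq_top_of_isUnit_mem hA isUnit_one) hprime.ne_top
    choose g hg1 hg2 using hcov
    set C : Finset (EIdx q) := Finset.image g Finset.univ with hCdef
    have hC : Cov q C := fun i => ⟨g i, Finset.mem_image_of_mem _ (Finset.mem_univ i), hg1 i⟩
    have hmem : ymon k q b ∈ (PC k q C) ^ 2 := (ymon_mem_PC_sq_iff b C).mpr (h C hC)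
    have hPCle : PC k q C ≤ P := by
      rw [PC, Ideal.span_le]
      rintro _ ⟨A, hA, rfl⟩
      obtain ⟨i, -, rfl⟩ := Finset.mem_image.mp (Finset.mem_coe.mp hA)
      exact hg2 i
    exact Ideal.pow_right_mono hPCle 2 hmem

lemma ymon_mem_extsq_iff (b : EIdx q → ℕ) :
    ymon k q b ∈ (extIdeal k q) ^ 2 ↔ ∃ i j : Fin q, ∀ A : EIdx q, eb q i A + eb q j A ≤ b A := by
  classical
  have hE2 : (extIdeal k q) ^ 2 = Ideal.span ((fun c => monomial c (1 : k)) ''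
      {c | ∃ i j : Fin q, c = toF (eb q i) + toF (eb q j)}) := by
    rw [pow_two, extIdeal, Ideal.span_mul_span']
    congr 1
    ext f
    constructor
    · rintro ⟨_, ⟨i, rfl⟩, _, ⟨j, rfl⟩, rfl⟩
      refine ⟨toF (eb q i) + toF (eb q j), ⟨i, j, rfl⟩, ?_⟩
      show monomial (toF (eb q i) + toF (eb q j)) (1 : k) = extGen k q i * extGen k q j
      rw [extGen_eq_ymon, extGen_eq_ymon, ymon_eq, ymon_eq, monomial_mul, one_mul]
    · rintro ⟨c, ⟨i, j, rfl⟩, rfl⟩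
      refine ⟨extGen k q i, ⟨i, rfl⟩, extGen k q j, ⟨j, rfl⟩, ?_⟩
      show extGen k q i * extGen k q j = monomial (toF (eb q i) + toF (eb q j)) (1 : k)
      rw [extGen_eq_ymon, extGen_eq_ymon, ymon_eq, ymon_eq, monomial_mul, one_mul]
  rw [ymon_eq, hE2, mem_span_monomial_iff]
  constructor
  · rintro ⟨c, ⟨i, j, rfl⟩, hle⟩
    exact ⟨i, j, fun A => by have := hle A; simpa using this⟩
  · rintro ⟨i, j, h⟩
    refine ⟨toF (eb q i) + toF (eb q j), ⟨i, j, rfl⟩, fun A => ?_⟩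
    simpa using h A

end Symb


section Comb
variable {k : Type*} [Field k] {q : ℕ}

/-- Exponent vector of `f_X`. -/
def βf (Xs : Finset (Fin q)) (A : EIdx q) : ℕ :=
  if Xs ⊆ A.1 then 2 else if (Xs ∩ A.1).Nonempty then 1 else 0

lemma compl_nonempty_iff {Xs A : Finset (Fin q)} : (Xs ∩ Aᶜ).Nonempty ↔ ¬ Xs ⊆ A := by
  constructor
  · rintro ⟨x, hx⟩ hsub
    rw [Finset.mem_inter, Finset.mem_compl] at hx
    exact hx.2 (hsub hx.1)
  · intro h
    obtain ⟨x, hx1, hx2⟩ := Finset.not_subset.mp h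
    exact ⟨x, Finset.mem_inter.mpr ⟨hx1, Finset.mem_compl.mpr hx2⟩⟩

lemma fMon_eq (Xs : Finset (Fin q)) : fMon k q Xs = ymon k q (βf Xs) := by
  rw [fMon, ymon, ← Finset.prod_mul_distrib]
  apply Finset.prod_congr rfl
  intro A _
  unfold βf
  by_cases h1 : Xs ⊆ A.1
  · rw [if_pos h1, if_pos h1, if_neg (fun h => (compl_nonempty_iff.mp h.2) h1), mul_one]
  · rw [if_neg h1, if_neg h1, one_mul]
    by_cases h2 : (Xs ∩ A.1).Nonempty
    · rw [if_pos ⟨h2, compl_nonempty_iff.mpr h1⟩, if_pos h2, pow_one]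
    · rw [if_neg (fun h => h2 h.1), if_neg h2, pow_zero]

variable (q) in
/-- The membership criterion for `E^{(2)}` as a predicate on exponent vectors. -/
def Sym2P (b : EIdx q → ℕ) : Prop :=
  ∀ C : Finset (EIdx q), Cov q C → 2 ≤ ∑ A ∈ C, b A

/-- decrement at one coordinate -/
def dec (b : EIdx q → ℕ) (A : EIdx q) : EIdx q → ℕ :=
  fun B => if B = A then b B - 1 else b B

lemma sum_dec_mem {b : EIdx q → ℕ} {A : EIdx q} {C : Finset (EIdx q)} (hA : A ∈ C) :
    ∑ B ∈ C, dec b A B = (∑ B ∈ C.erase A, b B) + (b A - 1) := by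
  rw [← Finset.sum_erase_add C (dec b A) hA]
  congr 1
  · exact Finset.sum_congr rfl fun B hB => if_neg (Finset.mem_erase.mp hB).1
  · exact if_pos rfl

lemma sum_dec_not_mem {b : EIdx q → ℕ} {A : EIdx q} {C : Finset (EIdx q)} (hA : A ∉ C) :
    ∑ B ∈ C, dec b A B = ∑ B ∈ C, b B :=
  Finset.sum_congr rfl fun B hB => if_neg (fun (h : B = A) => hA (h ▸ hB))

lemma sym2_βf {Xs : Finset (Fin q)} (hX : Xs.Nonempty) : Sym2P q (βf Xs) := by
  intro C hC
  obtain ⟨x, hx⟩ := hX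
  obtain ⟨A, hAC, hxA⟩ := hC x
  by_cases hsub : Xs ⊆ A.1
  · have h2 : βf Xs A = 2 := if_pos hsub
    calc (2:ℕ) = βf Xs A := h2.symm
      _ ≤ ∑ B ∈ C, βf Xs B := Finset.single_le_sum (fun _ _ => Nat.zero_le _) hAC
  · obtain ⟨x', hx'X, hx'A⟩ := Finset.not_subset.mp hsub
    obtain ⟨B, hBC, hx'B⟩ := hC x'
    have hBA : B ≠ A := fun h => hx'A (h ▸ hx'B)
    have h1 : 1 ≤ βf Xs A := by
      unfold βf
      rw [if_neg hsub, if_pos ⟨x, Finset.mem_inter.mpr ⟨hx, hxA⟩⟩]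
    have h2 : 1 ≤ βf Xs B := by
      unfold βf
      by_cases hsub' : Xs ⊆ B.1
      · rw [if_pos hsub']; omega
      · rw [if_neg hsub', if_pos ⟨x', Finset.mem_inter.mpr ⟨hx'X, hx'B⟩⟩]
    have hsubC : ({B, A} : Finset (EIdx q)) ⊆ C := by
      intro y hy
      rcases Finset.mem_insert.mp hy with rfl | hy
      · exact hBC
      · rw [Finset.mem_singleton] at hy; subst hy; exact hAC
    have hps := Finset.sum_le_sum_of_subset (f := βf Xs) hsubC
    rw [Finset.sum_pair hBA] at hps
    omega

lemma not_sym2_dec_βf {Xs : Finset (Fin q)} (hX : Xs.Nonempty) (A : EIdx q)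
    (hpos : 0 < βf Xs A) : ¬ Sym2P q (dec (βf Xs) A) := by
  classical
  intro hS
  obtain ⟨x, hx⟩ := hX
  by_cases hsub : Xs ⊆ A.1
  · -- βf A = 2
    set C : Finset (EIdx q) :=
      insert A (Finset.univ.filter fun B : EIdx q => Xs ∩ B.1 = ∅) with hCdef
    have hC : Cov q C := by
      intro i
      by_cases hi : i ∈ Xs
      · exact ⟨A, Finset.mem_insert_self _ _, hsub hi⟩
      · refine ⟨⟨{i}, Finset.singleton_nonempty i⟩, ?_, Finset.mem_singleton_self i⟩
        apply Finset.mem_insert_of_mem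
        simp only [Finset.mem_filter, Finset.mem_univ, true_and]
        exact Finset.inter_singleton_of_notMem hi
    have hAnot : A ∉ Finset.univ.filter (fun B : EIdx q => Xs ∩ B.1 = ∅) := by
      simp only [Finset.mem_filter, Finset.mem_univ, true_and]
      intro h
      have hmem : x ∈ Xs ∩ A.1 := Finset.mem_inter.mpr ⟨hx, hsub hx⟩
      rw [h] at hmem
      exact absurd hmem (Finset.notMem_empty x)
    have hsum : ∑ B ∈ C, dec (βf Xs) A B = 1 := by
      rw [hCdef, Finset.sum_insert hAnot]
      have h1 : dec (βf Xs) A A = 1 := by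
        unfold dec βf
        rw [if_pos rfl, if_pos hsub]
      have h0 : ∑ B ∈ Finset.univ.filter (fun B : EIdx q => Xs ∩ B.1 = ∅),
          dec (βf Xs) A B = 0 := by
        apply Finset.sum_eq_zero
        intro B hB
        rw [Finset.mem_filter] at hB
        have hBA : B ≠ A := by
          rintro rfl
          have hmem : x ∈ Xs ∩ B.1 := Finset.mem_inter.mpr ⟨hx, hsub hx⟩
          rw [hB.2] at hmem
          exact absurd hmem (Finset.notMem_empty x)
        have hsub' : ¬ Xs ⊆ B.1 := by
          intro h
          have hmem : x ∈ Xs ∩ B.1 := Finset.mem_inter.mpr ⟨hx, h hx⟩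
          rw [hB.2] at hmem
          exact absurd hmem (Finset.notMem_empty x)
        have hne : ¬ (Xs ∩ B.1).Nonempty := by rw [hB.2]; exact Finset.not_nonempty_empty
        unfold dec βf
        rw [if_neg hBA, if_neg hsub', if_neg hne]
      rw [h1, h0]
    have := hS C hC
    omega
  · -- βf A = 1
    have hintA : (Xs ∩ A.1).Nonempty := by
      by_contra h
      unfold βf at hpos
      rw [if_neg hsub, if_neg h] at hpos
      exact absurd hpos (lt_irrefl 0)
    obtain ⟨x', hx'X, hx'A⟩ := Finset.not_subset.mp hsub
    obtain ⟨x0, hx0⟩ := hintA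
    rw [Finset.mem_inter] at hx0
    have hintA : (Xs ∩ A.1).Nonempty := ⟨x0, Finset.mem_inter.mpr hx0⟩
    have hB0ne : (Xs \ A.1).Nonempty := ⟨x', Finset.mem_sdiff.mpr ⟨hx'X, hx'A⟩⟩
    set B0 : EIdx q := ⟨Xs \ A.1, hB0ne⟩ with hB0def
    have hB0A : B0 ≠ A := by
      intro h
      have : x' ∈ A.1 := by
        rw [← h]
        exact Finset.mem_sdiff.mpr ⟨hx'X, hx'A⟩
      exact hx'A this
    set F : Finset (EIdx q) := Finset.univ.filter (fun B : EIdx q => Xs ∩ B.1 = ∅) with hFdef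
    have hB0F : B0 ∉ F := by
      simp only [hFdef, Finset.mem_filter, Finset.mem_univ, true_and]
      intro h
      have hmem : x' ∈ Xs ∩ B0.1 :=
        Finset.mem_inter.mpr ⟨hx'X, Finset.mem_sdiff.mpr ⟨hx'X, hx'A⟩⟩
      rw [h] at hmem
      exact absurd hmem (Finset.notMem_empty x')
    have hAF : A ∉ insert B0 F := by
      intro h
      rcases Finset.mem_insert.mp h with h | h
      · exact hB0A h.symm
      · simp only [hFdef, Finset.mem_filter, Finset.mem_univ, true_and] at h
        obtain ⟨y, hy⟩ := hintA
        rw [h] at hy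
        exact absurd hy (Finset.notMem_empty y)
    set C : Finset (EIdx q) := insert A (insert B0 F) with hCdef
    have hC : Cov q C := by
      intro i
      by_cases hi : i ∈ Xs
      · by_cases hiA : i ∈ A.1
        · exact ⟨A, Finset.mem_insert_self _ _, hiA⟩
        · refine ⟨B0, ?_, Finset.mem_sdiff.mpr ⟨hi, hiA⟩⟩
          exact Finset.mem_insert_of_mem (Finset.mem_insert_self _ _)
      · refine ⟨⟨{i}, Finset.singleton_nonempty i⟩, ?_, Finset.mem_singleton_self i⟩
        apply Finset.mem_insert_of_mem
        apply Finset.mem_insert_of_mem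
        simp only [hFdef, Finset.mem_filter, Finset.mem_univ, true_and]
        exact Finset.inter_singleton_of_notMem hi
    have hsum : ∑ B ∈ C, dec (βf Xs) A B = 1 := by
      rw [hCdef, Finset.sum_insert hAF, Finset.sum_insert hB0F]
      have h1 : dec (βf Xs) A A = 0 := by
        unfold dec βf
        rw [if_pos rfl, if_neg hsub, if_pos hintA]
      have h2 : dec (βf Xs) A B0 = 1 := by
        have hsubB0 : ¬ Xs ⊆ B0.1 := by
          intro h
          have := h hx0.1
          rw [hB0def] at this
          exact (Finset.mem_sdiff.mp this).2 hx0.2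
        have hintAB0 : (Xs ∩ B0.1).Nonempty :=
          ⟨x', Finset.mem_inter.mpr ⟨hx'X, Finset.mem_sdiff.mpr ⟨hx'X, hx'A⟩⟩⟩
        unfold dec βf
        rw [if_neg hB0A, if_neg hsubB0, if_pos hintAB0]
      have h0 : ∑ B ∈ F, dec (βf Xs) A B = 0 := by
        apply Finset.sum_eq_zero
        intro B hB
        rw [hFdef, Finset.mem_filter] at hB
        have hBA : B ≠ A := by
          rintro rfl
          obtain ⟨y, hy⟩ := hintA
          rw [hB.2] at hy
          exact absurd hy (Finset.notMem_empty y)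
        have hsub' : ¬ Xs ⊆ B.1 := by
          intro h
          have hmem : x ∈ Xs ∩ B.1 := Finset.mem_inter.mpr ⟨hx, h hx⟩
          rw [hB.2] at hmem
          exact absurd hmem (Finset.notMem_empty x)
        have hne : ¬ (Xs ∩ B.1).Nonempty := by rw [hB.2]; exact Finset.not_nonempty_empty
        unfold dec βf
        rw [if_neg hBA, if_neg hsub', if_neg hne]
      omega
    have := hS C hC
    omega

end Comb


section Nec
variable {k : Type*} [Field k] {q : ℕ}

lemma not_sym2_iff {b : EIdx q → ℕ} :
    ¬ Sym2P q b ↔ ∃ C : Finset (EIdx q), Cov q C ∧ ∑ A ∈ C, b A ≤ 1 := by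
  unfold Sym2P
  push_neg
  constructor
  · rintro ⟨C, h1, h2⟩; exact ⟨C, h1, by omega⟩
  · rintro ⟨C, h1, h2⟩; exact ⟨C, h1, by omega⟩

lemma eq_βf_of_min {b : EIdx q → ℕ} (H1 : Sym2P q b)
    (H2 : ∀ A, 0 < b A → ¬ Sym2P q (dec b A)) :
    ∃ Xs : Finset (Fin q), Xs.Nonempty ∧ b = βf Xs := by
  classical
  set Xs : Finset (Fin q) :=
    Finset.univ.filter (fun i : Fin q => ∀ A : EIdx q, i ∈ A.1 → 1 ≤ b A) with hXsdef
  have hXmem : ∀ i : Fin q, i ∈ Xs ↔ ∀ A : EIdx q, i ∈ A.1 → 1 ≤ b A := by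
    intro i
    simp [hXsdef]
  set Z : Finset (EIdx q) := Finset.univ.filter (fun B : EIdx q => b B = 0) with hZdef
  have hZmem : ∀ B : EIdx q, B ∈ Z ↔ b B = 0 := by intro B; simp [hZdef]
  have hZsum : ∑ B ∈ Z, b B = 0 :=
    Finset.sum_eq_zero fun B hB => (hZmem B).mp hB
  have hZcov : ∀ i : Fin q, i ∉ Xs → ∃ A : EIdx q, i ∈ A.1 ∧ A ∈ Z := by
    intro i hi
    rw [hXmem] at hi
    push_neg at hi
    obtain ⟨A, hA1, hA2⟩ := hi
    exact ⟨A, hA1, (hZmem A).mpr (by omega)⟩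
  -- Xs is nonempty
  have hXne : Xs.Nonempty := by
    rw [Finset.nonempty_iff_ne_empty]
    intro hempty
    have hcov : Cov q Z := by
      intro i
      have hi : i ∉ Xs := by rw [hempty]; exact Finset.notMem_empty i
      obtain ⟨A, h1, h2⟩ := hZcov i hi
      exact ⟨A, h2, h1⟩
    have := H1 Z hcov
    omega
  refine ⟨Xs, hXne, funext fun A => ?_⟩
  obtain ⟨x, hx⟩ := hXne
  by_cases hsub : Xs ⊆ A.1
  · -- b A = 2
    have hge1 : 1 ≤ b A := (hXmem x).mp hx A (hsub hx)
    have hge2 : 2 ≤ b A := by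
      by_contra hlt
      have hbA : b A = 1 := by omega
      have hAZ : A ∉ Z := by rw [hZmem]; omega
      have hcov : Cov q (insert A Z) := by
        intro i
        by_cases hi : i ∈ Xs
        · exact ⟨A, Finset.mem_insert_self _ _, hsub hi⟩
        · obtain ⟨B, h1, h2⟩ := hZcov i hi
          exact ⟨B, Finset.mem_insert_of_mem h2, h1⟩
      have := H1 _ hcov
      rw [Finset.sum_insert hAZ, hZsum] at this
      omega
    have hle2 : b A ≤ 2 := by
      by_contra hgt
      obtain ⟨C, hC, hCsum⟩ := not_sym2_iff.mp (H2 A (by omega))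
      by_cases hAC : A ∈ C
      · have h := Finset.single_le_sum
          (f := dec b A) (fun _ _ => Nat.zero_le _) hAC
        have : dec b A A = b A - 1 := if_pos rfl
        omega
      · rw [sum_dec_not_mem hAC] at hCsum
        have := H1 C hC
        omega
    unfold βf
    rw [if_pos hsub]
    omega
  · by_cases hintA : (Xs ∩ A.1).Nonempty
    · -- b A = 1
      obtain ⟨x0, hx0'⟩ := hintA
      rw [Finset.mem_inter] at hx0'
      have hge1 : 1 ≤ b A := (hXmem x0).mp hx0'.1 A hx0'.2
      have hle1 : b A ≤ 1 := by
        by_contra hgt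
        obtain ⟨C, hC, hCsum⟩ := not_sym2_iff.mp (H2 A (by omega))
        by_cases hAC : A ∈ C
        · obtain ⟨x', hx'X, hx'A⟩ := Finset.not_subset.mp hsub
          obtain ⟨B, hBC, hx'B⟩ := hC x'
          have hBA : B ≠ A := fun h => hx'A (h ▸ hx'B)
          have hbB : 1 ≤ b B := (hXmem x').mp hx'X B hx'B
          have hsubC : ({B, A} : Finset (EIdx q)) ⊆ C := by
            intro y hy
            rcases Finset.mem_insert.mp hy with rfl | hy
            · exact hBC
            · rw [Finset.mem_singleton] at hy; subst hy; exact hAC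
          have hps := Finset.sum_le_sum_of_subset (f := dec b A) hsubC
          rw [Finset.sum_pair hBA] at hps
          have e1 : dec b A B = b B := if_neg hBA
          have e2 : dec b A A = b A - 1 := if_pos rfl
          omega
        · rw [sum_dec_not_mem hAC] at hCsum
          have := H1 C hC
          omega
      unfold βf
      rw [if_neg hsub, if_pos ⟨x0, Finset.mem_inter.mpr hx0'⟩]
      omega
    · -- b A = 0
      have hbA : b A = 0 := by
        by_contra hpos
        obtain ⟨C, hC, hCsum⟩ := not_sym2_iff.mp (H2 A (by omega))
        set C' : Finset (EIdx q) := (C.erase A) ∪ Z with hC'def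
        have hcov : Cov q C' := by
          intro i
          obtain ⟨B, hBC, hiB⟩ := hC i
          by_cases hBA : B = A
          · subst hBA
            have hiX : i ∉ Xs := by
              intro hiX
              exact hintA ⟨i, Finset.mem_inter.mpr ⟨hiX, hiB⟩⟩
            obtain ⟨B', h1, h2⟩ := hZcov i hiX
            exact ⟨B', Finset.mem_union_right _ h2, h1⟩
          · exact ⟨B, Finset.mem_union_left _ (Finset.mem_erase.mpr ⟨hBA, hBC⟩), hiB⟩
        have hsum' : ∑ B ∈ C', b B ≤ 1 := by
          have he : ∑ B ∈ C.erase A, b B = ∑ B ∈ C', b B := by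
            apply Finset.sum_subset Finset.subset_union_left
            intro B hB1 hB2
            rcases Finset.mem_union.mp hB1 with h | h
            · exact absurd h hB2
            · exact (hZmem B).mp h
          have hdece : ∑ B ∈ C.erase A, dec b A B = ∑ B ∈ C.erase A, b B :=
            Finset.sum_congr rfl fun B hB => if_neg (Finset.mem_erase.mp hB).1
          have hsub2 : ∑ B ∈ C.erase A, dec b A B ≤ ∑ B ∈ C, dec b A B :=
            Finset.sum_le_sum_of_subset (Finset.erase_subset _ _)
          omega
        have := H1 C' hcov
        omega
      unfold βf
      rw [if_neg hsub, if_neg hintA]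
      omega

end Nec


section Sq
variable {k : Type*} [Field k] {q : ℕ}

lemma fMon_mem_sq_iff {Xs : Finset (Fin q)} (hX : Xs.Nonempty) :
    fMon k q Xs ∈ (extIdeal k q) ^ 2 ↔ Xs.card ≤ 2 := by
  rw [fMon_eq, ymon_mem_extsq_iff]
  constructor
  · rintro ⟨i, j, h⟩
    by_contra hcard
    push_neg at hcard
    have hnotsub1 : ∀ y : Fin q, ¬ Xs ⊆ ({y} : Finset (Fin q)) := by
      intro y hsub
      have := Finset.card_le_card hsub
      rw [Finset.card_singleton] at this
      omega
    have hbs : ∀ y : Fin q, βf Xs ⟨{y}, Finset.singleton_nonempty y⟩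
        = if y ∈ Xs then 1 else 0 := by
      intro y
      unfold βf
      rw [if_neg (hnotsub1 y)]
      by_cases hy : y ∈ Xs
      · rw [if_pos ⟨y, Finset.mem_inter.mpr ⟨hy, Finset.mem_singleton_self y⟩⟩, if_pos hy]
      · rw [if_neg, if_neg hy]
        rintro ⟨z, hz⟩
        rw [Finset.mem_inter, Finset.mem_singleton] at hz
        exact hy (hz.2 ▸ hz.1)
    have hA1 := h ⟨{i}, Finset.singleton_nonempty i⟩
    have hA2 := h ⟨{j}, Finset.singleton_nonempty j⟩
    rw [hbs] at hA1 hA2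
    unfold eb at hA1 hA2
    simp only [Finset.mem_singleton, if_pos rfl] at hA1 hA2
    have hiX : i ∈ Xs := by
      by_contra hni
      rw [if_neg hni] at hA1
      split_ifs at hA1 <;> omega
    have hjX : j ∈ Xs := by
      by_contra hnj
      rw [if_neg hnj] at hA2
      split_ifs at hA2 <;> omega
    have hA3 := h ⟨{i, j}, Finset.insert_nonempty i {j}⟩
    unfold eb βf at hA3
    have hsub3 : ¬ Xs ⊆ ({i, j} : Finset (Fin q)) := by
      intro hsub
      have h1 := Finset.card_le_card hsub
      have h2 : ({i, j} : Finset (Fin q)).card ≤ 2 :=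
        le_trans (Finset.card_insert_le _ _) (by rw [Finset.card_singleton])
      omega
    rw [if_neg hsub3, if_pos (Finset.mem_insert_self i {j}),
      if_pos (Finset.mem_insert_of_mem (Finset.mem_singleton_self j))] at hA3
    split_ifs at hA3 <;> omega
  · intro hcard
    have hpos := Finset.card_pos.mpr hX
    have hcases : Xs.card = 1 ∨ Xs.card = 2 := by omega
    rcases hcases with h1 | h2
    · obtain ⟨i, rfl⟩ := Finset.card_eq_one.mp h1
      refine ⟨i, i, fun A => ?_⟩
      unfold eb βf
      by_cases hiA : i ∈ A.1
      · rw [if_pos hiA, if_pos (Finset.singleton_subset_iff.mpr hiA)]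
      · rw [if_neg hiA]
        exact Nat.zero_le _
    · obtain ⟨i, j, hij, rfl⟩ := Finset.card_eq_two.mp h2
      refine ⟨i, j, fun A => ?_⟩
      unfold eb βf
      by_cases hiA : i ∈ A.1 <;> by_cases hjA : j ∈ A.1
      · rw [if_pos hiA, if_pos hjA, if_pos
          (Finset.insert_subset_iff.mpr ⟨hiA, Finset.singleton_subset_iff.mpr hjA⟩)]
      · rw [if_pos hiA, if_neg hjA,
          if_neg (fun hsub => hjA (hsub (Finset.mem_insert_of_mem (Finset.mem_singleton_self j)))),
          if_pos ⟨i, Finset.mem_inter.mpr ⟨Finset.mem_insert_self i {j}, hiA⟩⟩]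
      · rw [if_neg hiA, if_pos hjA,
          if_neg (fun hsub => hiA (hsub (Finset.mem_insert_self i {j}))),
          if_pos ⟨j, Finset.mem_inter.mpr
            ⟨Finset.mem_insert_of_mem (Finset.mem_singleton_self j), hjA⟩⟩]
      · rw [if_neg hiA, if_neg hjA]
        exact Nat.zero_le _

lemma counting (q : ℕ) :
    (Finset.univ.filter fun Xs : Finset (Fin q) => Xs.Nonempty ∧ 2 < Xs.card).card
      = 2 ^ q - 1 - q - q.choose 2 := by
  classical
  have hpred : (Finset.univ.filter fun Xs : Finset (Fin q) => Xs.Nonempty ∧ 2 < Xs.card)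
      = Finset.univ.filter fun Xs : Finset (Fin q) => ¬ Xs.card ≤ 2 := by
    ext Xs
    simp only [Finset.mem_filter, Finset.mem_univ, true_and]
    constructor
    · rintro ⟨-, h⟩; omega
    · intro h
      exact ⟨Finset.card_pos.mp (by omega), by omega⟩
  rw [hpred]
  have htot := Finset.card_filter_add_card_filter_not
      (s := (Finset.univ : Finset (Finset (Fin q)))) (p := fun Xs => Xs.card ≤ 2)
  have huniv : (Finset.univ : Finset (Finset (Fin q))).card = 2 ^ q := by
    rw [Finset.card_univ, Fintype.card_finset, Fintype.card_fin]
  have hcards : ∀ n : ℕ, (Finset.univ.filter fun Xs : Finset (Fin q) => Xs.card = n).card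
      = q.choose n := by
    intro n
    have he : Finset.univ.filter (fun Xs : Finset (Fin q) => Xs.card = n)
        = Finset.powersetCard n Finset.univ := by
      rw [Finset.powersetCard_eq_filter, Finset.powerset_univ]
    rw [he, Finset.card_powersetCard, Finset.card_univ, Fintype.card_fin]
  have d1 : Disjoint (Finset.univ.filter fun Xs : Finset (Fin q) => Xs.card = 1)
      (Finset.univ.filter fun Xs : Finset (Fin q) => Xs.card = 2) := by
    rw [Finset.disjoint_left]
    intro a ha hb
    simp only [Finset.mem_filter] at ha hb
    omega
  have d0 : Disjoint (Finset.univ.filter fun Xs : Finset (Fin q) => Xs.card = 0)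
      ((Finset.univ.filter fun Xs : Finset (Fin q) => Xs.card = 1)
        ∪ (Finset.univ.filter fun Xs : Finset (Fin q) => Xs.card = 2)) := by
    rw [Finset.disjoint_left]
    intro a ha hb
    simp only [Finset.mem_filter, Finset.mem_union] at ha hb
    omega
  have hsplit : (Finset.univ.filter fun Xs : Finset (Fin q) => Xs.card ≤ 2).card
      = q.choose 0 + (q.choose 1 + q.choose 2) := by
    have he : Finset.univ.filter (fun Xs : Finset (Fin q) => Xs.card ≤ 2)
        = (Finset.univ.filter fun Xs : Finset (Fin q) => Xs.card = 0)
          ∪ ((Finset.univ.filter fun Xs : Finset (Fin q) => Xs.card = 1)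
            ∪ (Finset.univ.filter fun Xs : Finset (Fin q) => Xs.card = 2)) := by
      ext Xs
      simp only [Finset.mem_filter, Finset.mem_univ, true_and, Finset.mem_union]
      omega
    rw [he, Finset.card_union_of_disjoint d0, Finset.card_union_of_disjoint d1,
      hcards, hcards, hcards]
  have hc0 : q.choose 0 = 1 := Nat.choose_zero_right q
  have hc1 : q.choose 1 = q := Nat.choose_one_right q
  omega

end Sq

end Stmt18

theorem stmt18 (k : Type*) [Field k] (q : ℕ) (hq : 1 ≤ q) :
    -- the minimal monomial generators of `E_q^{(2)}` are exactly the `f_X`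
    (∀ b : EIdx q → ℕ,
      (ymon k q b ∈ symbPow (extIdeal k q) 2 ∧
        ∀ A : EIdx q, 0 < b A →
          ymon k q (fun B => if B = A then b B - 1 else b B) ∉
            symbPow (extIdeal k q) 2) ↔
      ∃ Xs : Finset (Fin q), Xs.Nonempty ∧ ymon k q b = fMon k q Xs) ∧
    -- `f_X ∈ E_q²` iff `|X| ≤ 2`
    (∀ Xs : Finset (Fin q), Xs.Nonempty →
      (fMon k q Xs ∈ (extIdeal k q) ^ 2 ↔ Xs.card ≤ 2)) ∧
    -- hence `sdefect(2, E_q) = 2^q − 1 − q − C(q,2)`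
    (Finset.univ.filter fun Xs : Finset (Fin q) =>
        Xs.Nonempty ∧ 2 < Xs.card).card =
      2 ^ q - 1 - q - q.choose 2 := by
  open Stmt18 in
  refine ⟨?_, ?_, counting q⟩
  · intro b
    constructor
    · rintro ⟨h1, h2⟩
      rw [mem_symbPow_iff] at h1
      have h2' : ∀ A : EIdx q, 0 < b A → ¬ Sym2P q (dec b A) := by
        intro A hA hS
        exact h2 A hA ((mem_symbPow_iff (dec b A)).mpr hS)
      obtain ⟨Xs, hX, hb⟩ := eq_βf_of_min h1 h2'
      exact ⟨Xs, hX, by rw [hb, fMon_eq]⟩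
    · rintro ⟨Xs, hX, hb⟩
      have hbeq : b = βf Xs := ymon_inj (hb.trans (fMon_eq Xs))
      subst hbeq
      constructor
      · rw [mem_symbPow_iff]
        exact sym2_βf hX
      · intro A hA hmem
        exact not_sym2_dec_βf hX A hA
          ((mem_symbPow_iff (dec (βf Xs) A)).mp hmem)
  · intro Xs hX
    exact fMon_mem_sq_iff hX
end

section
/- For q ≥ 3 and r ≥ 2, the monomial h(r,q) = y^{1+e_{[q]}} · ε_1^{r−2} (the product of all variables y_A, with y_{[q]} squared, times ε_1^{r−2}) lies in E_q^{(r)} but not in E_q^r. In particular, for q = 3, h(r,3) has degree 4r and is not expressible as ε_1^{n_1} ε_2^{n_2} ε_3^{n_3} with n_1+n_2+n_3 = r. -/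
open MvPolynomial

/-- `h(r,q) = y^{1+e_{[q]}} ε_1^{r-2}`: the product of all the variables, with
`y_{[q]}` squared, times `ε_1^{r-2}`. -/
noncomputable def hMon (k : Type*) [Field k] (q r : ℕ) (h0 : 0 < q) :
    MvPolynomial (EIdx q) k :=
  (∏ A : EIdx q, X A) *
    X (⟨Finset.univ, ⟨⟨0, h0⟩, Finset.mem_univ _⟩⟩ : EIdx q) *
    extGen k q ⟨0, h0⟩ ^ (r - 2)

noncomputable def wt (q : ℕ) (i : Fin q) : EIdx q →₀ ℕ :=
  ∑ A : EIdx q, if i ∈ A.1 then Finsupp.single A 1 else 0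

lemma wt_apply (q : ℕ) (i : Fin q) (A : EIdx q) :
    wt q i A = if i ∈ A.1 then 1 else 0 := by
  rw [wt, Finsupp.finset_sum_apply]
  rw [Finset.sum_eq_single_of_mem A (Finset.mem_univ A)]
  · by_cases h : i ∈ A.1 <;> simp [h]
  · intro B _ hBA
    by_cases h : i ∈ B.1 <;> simp [h, Finsupp.single_apply, hBA]

lemma extGen_eq (k : Type*) [Field k] (q : ℕ) (i : Fin q) :
    extGen k q i = monomial (wt q i) 1 := by
  rw [extGen, wt, monomial_sum_one]
  refine Finset.prod_congr rfl fun A _ => ?_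
  by_cases h : i ∈ A.1 <;> simp [h, X, monomial_zero', C_1]

noncomputable def uSet (q : ℕ) (h0 : 0 < q) : EIdx q :=
  ⟨Finset.univ, ⟨⟨0, h0⟩, Finset.mem_univ _⟩⟩

noncomputable def Dh (q r : ℕ) (h0 : 0 < q) : EIdx q →₀ ℕ :=
  (∑ A : EIdx q, Finsupp.single A 1) + Finsupp.single (uSet q h0) 1
    + (r - 2) • wt q ⟨0, h0⟩

lemma Dh_apply (q r : ℕ) (h0 : 0 < q) (A : EIdx q) :
    Dh q r h0 A = 1 + (if A = uSet q h0 then 1 else 0)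
      + (r - 2) * (if (⟨0, h0⟩ : Fin q) ∈ A.1 then 1 else 0) := by
  have h1 : (∑ B : EIdx q, Finsupp.single B 1) A = 1 := by
    rw [Finsupp.finset_sum_apply,
      Finset.sum_eq_single_of_mem A (Finset.mem_univ A)]
    · simp
    · intro B _ hBA; simp [Finsupp.single_apply, hBA]
  rw [Dh, Finsupp.add_apply, Finsupp.add_apply, h1, Finsupp.smul_apply,
    wt_apply, smul_eq_mul, Finsupp.single_apply]
  congr 2
  by_cases h : A = uSet q h0 <;> simp [h, eq_comm]


lemma hMon_eq (k : Type*) [Field k] (q r : ℕ) (h0 : 0 < q) :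
    hMon k q r h0 = monomial (Dh q r h0) 1 := by
  have h1 : (∏ A : EIdx q, (X A : MvPolynomial (EIdx q) k))
      = monomial (∑ A : EIdx q, Finsupp.single A 1) 1 := by
    rw [monomial_sum_one]
    exact Finset.prod_congr rfl fun A _ => rfl
  have h2 : (X (uSet q h0) : MvPolynomial (EIdx q) k)
      = monomial (Finsupp.single (uSet q h0) 1) 1 := rfl
  rw [hMon, extGen_eq, monomial_pow, one_pow]
  rw [show (⟨Finset.univ, ⟨⟨0, h0⟩, Finset.mem_univ _⟩⟩ : EIdx q) = uSet q h0 from rfl,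
    h1, h2, monomial_mul, monomial_mul, one_mul, one_mul, Dh]

lemma sumwt_apply (q : ℕ) (n : Fin q → ℕ) (A : EIdx q) :
    (∑ i, n i • wt q i) A = ∑ i ∈ A.1, n i := by
  rw [Finsupp.finset_sum_apply]
  simp only [Finsupp.smul_apply, wt_apply, smul_eq_mul, mul_ite, mul_one, mul_zero]
  rw [Finset.sum_ite_mem, Finset.univ_inter]

lemma coeff_mul_ne_zero {k : Type*} [Field k] {q : ℕ}
    {p p' : MvPolynomial (EIdx q) k} {d : EIdx q →₀ ℕ}
    (h : coeff d (p * p') ≠ 0) :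
    ∃ d1 d2, d1 + d2 = d ∧ coeff d1 p ≠ 0 ∧ coeff d2 p' ≠ 0 := by
  rw [coeff_mul] at h
  obtain ⟨x, hxm, hx⟩ := Finset.exists_ne_zero_of_sum_ne_zero h
  exact ⟨x.1, x.2, Finset.HasAntidiagonal.mem_antidiagonal.mp hxm,
    fun h1 => hx (by rw [h1, zero_mul]), fun h2 => hx (by rw [h2, mul_zero])⟩


lemma mem_extIdeal_coeff (k : Type*) [Field k] (q : ℕ)
    {x : MvPolynomial (EIdx q) k} (hx : x ∈ extIdeal k q)
    {d : EIdx q →₀ ℕ} (hd : coeff d x ≠ 0) :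
    ∃ i : Fin q, ∀ A : EIdx q, wt q i A ≤ d A := by
  induction hx using Submodule.span_induction generalizing d with
  | mem p hp =>
    obtain ⟨i, rfl⟩ := hp
    refine ⟨i, fun A => ?_⟩
    rw [extGen_eq, coeff_monomial] at hd
    split_ifs at hd with h
    · rw [← h]
    · exact absurd rfl hd
  | zero => simp at hd
  | add p p' hp hp' ihp ihp' =>
    rw [coeff_add] at hd
    rcases (by by_contra hc; push_neg at hc; simp [hc.1, hc.2] at hd :
        coeff d p ≠ 0 ∨ coeff d p' ≠ 0) with h | h
    · exact ihp h
    · exact ihp' h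
  | smul c p hp ihp =>
    rw [smul_eq_mul] at hd
    obtain ⟨d1, d2, hdd, -, h2⟩ := coeff_mul_ne_zero hd
    obtain ⟨i, hi⟩ := ihp h2
    refine ⟨i, fun A => le_trans (hi A) ?_⟩
    rw [← hdd, Finsupp.add_apply]
    omega

lemma mem_pow_coeff (k : Type*) [Field k] (q : ℕ) (r : ℕ)
    {x : MvPolynomial (EIdx q) k} (hx : x ∈ (extIdeal k q) ^ r)
    {d : EIdx q →₀ ℕ} (hd : coeff d x ≠ 0) :
    ∃ n : Fin q → ℕ, (∑ i, n i) = r ∧ ∀ A : EIdx q, (∑ i ∈ A.1, n i) ≤ d A := by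
  induction r generalizing x d with
  | zero =>
    exact ⟨0, by simp, fun A => by simp⟩
  | succ r ih =>
    rw [pow_succ] at hx
    revert hd
    refine Submodule.mul_induction_on hx (fun a ha b hb => ?_) (fun p p' ihp ihp' => ?_)
    · intro hd
      obtain ⟨d1, d2, hdd, h1, h2⟩ := coeff_mul_ne_zero hd
      obtain ⟨n, hn, hnle⟩ := ih ha h1
      obtain ⟨i0, hi0⟩ := mem_extIdeal_coeff k q hb h2
      refine ⟨fun j => n j + if j = i0 then 1 else 0, ?_, fun A => ?_⟩
      · rw [Finset.sum_add_distrib, hn, Finset.sum_ite_eq' Finset.univ i0 (fun _ => 1)]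
        simp
      · rw [Finset.sum_add_distrib, Finset.sum_ite_eq' A.1 i0 (fun _ => 1), ← hdd,
          Finsupp.add_apply]
        have := hnle A
        have := hi0 A
        rw [wt_apply] at this
        split_ifs at this ⊢ <;> omega
    · intro hd
      rw [coeff_add] at hd
      rcases (by by_contra hc; push_neg at hc; simp [hc.1, hc.2] at hd :
          coeff d p ≠ 0 ∨ coeff d p' ≠ 0) with h | h
      · exact ihp h
      · exact ihp' h

lemma comb (q r : ℕ) (hq : 3 ≤ q) (hr : 2 ≤ r) (h0 : 0 < q)
    (n : Fin q → ℕ) (hsum : ∑ i, n i = r)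
    (hle : ∀ A : EIdx q, (∑ i ∈ A.1, n i) ≤ Dh q r h0 A) : False := by
  set z : Fin q := ⟨0, h0⟩ with hz
  have hnu : ∀ (s : Finset (Fin q)) (hs : s.Nonempty), s.card < q →
      (⟨s, hs⟩ : EIdx q) ≠ uSet q h0 := by
    intro s hs hcard hcontra
    have h1 : s = Finset.univ := congrArg Subtype.val hcontra
    have h2 := congrArg Finset.card h1
    simp [Finset.card_univ] at h2
    omega
  have key1 : ∀ i : Fin q, i ≠ z → n i ≤ 1 := by
    intro i hi
    have h := hle ⟨{i}, Finset.singleton_nonempty i⟩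
    rw [Dh_apply, if_neg (hnu _ _ (by simp; omega)),
      if_neg (by simp only [Finset.mem_singleton]; exact Ne.symm hi)] at h
    simpa using h
  have key0 : n z ≤ r - 1 := by
    have h := hle ⟨{z}, Finset.singleton_nonempty z⟩
    rw [Dh_apply, if_neg (hnu _ _ (by simp; omega)),
      if_pos (Finset.mem_singleton_self z)] at h
    simp at h
    omega
  have key2 : ∀ i : Fin q, i ≠ z → n z + n i ≤ r - 1 := by
    intro i hi
    have hpair : ({z, i} : Finset (Fin q)).card = 2 := by
      rw [Finset.card_insert_of_notMem (by simpa using Ne.symm hi)]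
      simp
    have h := hle ⟨{z, i}, Finset.insert_nonempty z {i}⟩
    rw [Dh_apply, if_neg (hnu _ _ (by omega)),
      if_pos (Finset.mem_insert_self z {i})] at h
    rw [Finset.sum_pair (Ne.symm hi)] at h
    simp at h
    omega
  have key3 : ∀ i j : Fin q, i ≠ z → j ≠ z → i ≠ j → n i + n j ≤ 1 := by
    intro i j hiz hjz hij
    have hpair : ({i, j} : Finset (Fin q)).card = 2 := by
      rw [Finset.card_insert_of_notMem (by simpa using hij)]
      simp
    have h := hle ⟨{i, j}, Finset.insert_nonempty i {j}⟩
    have hnm : ¬ ((⟨0, h0⟩ : Fin q) ∈ (⟨{i, j}, Finset.insert_nonempty i {j}⟩ : EIdx q).1) := by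
      simp only [Finset.mem_insert, Finset.mem_singleton]
      push_neg
      exact ⟨Ne.symm hiz, Ne.symm hjz⟩
    rw [Dh_apply, if_neg (hnu _ _ (by omega)), if_neg hnm] at h
    rw [Finset.sum_pair hij] at h
    simpa using h
  have hex : ∃ i, i ≠ z ∧ n i ≠ 0 := by
    by_contra hc
    push_neg at hc
    have h := Finset.sum_eq_single (s := Finset.univ) (f := n) z
      (fun i _ hi => hc i hi) (by simp)
    rw [hsum] at h
    omega
  obtain ⟨i, hiz, hni⟩ := hex
  have hzero : ∀ j, j ≠ z → j ≠ i → n j = 0 := by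
    intro j hjz hji
    have := key3 i j hiz hjz (Ne.symm hji)
    omega
  have hsum2 : ∑ j, n j = n z + n i := by
    rw [← Finset.sum_pair (Ne.symm hiz)]
    refine (Finset.sum_subset (Finset.subset_univ _) ?_).symm
    intro j _ hj
    simp only [Finset.mem_insert, Finset.mem_singleton] at hj
    push_neg at hj
    exact hzero j hj.1 hj.2
  have := key2 i hiz
  omega

lemma hMon_mem_prime_pow (k : Type*) [Field k] (q r : ℕ) (hr : 2 ≤ r)
    (h0 : 0 < q) (P : Ideal (MvPolynomial (EIdx q) k)) (hP : P.IsPrime)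
    (hle : extIdeal k q ≤ P) : hMon k q r h0 ∈ P ^ r := by
  have hchoice : ∀ i : Fin q, ∃ A : EIdx q, i ∈ A.1 ∧ X A ∈ P := by
    intro i
    have hmem : extGen k q i ∈ P := hle (Ideal.subset_span ⟨i, rfl⟩)
    rw [extGen, Ideal.IsPrime.prod_mem_iff] at hmem
    obtain ⟨A, -, hA⟩ := hmem
    by_cases h : i ∈ A.1
    · exact ⟨A, h, by rwa [if_pos h] at hA⟩
    · rw [if_neg h] at hA
      exact absurd ((Ideal.eq_top_iff_one _).mpr hA) hP.ne_top
  choose c hc hXc using hchoice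
  set z : Fin q := ⟨0, h0⟩ with hz
  have main : ∃ a b rest, a ∈ P ∧ b ∈ P ∧
      (∏ A : EIdx q, (X A : MvPolynomial (EIdx q) k)) * X (uSet q h0)
        = a * b * rest := by
    by_cases hall : ∀ i, c i = c z
    · have huniv : c z = uSet q h0 := by
        apply Subtype.ext
        apply Finset.eq_univ_iff_forall.mpr
        intro i
        have := hc i
        rwa [hall i] at this
      refine ⟨X (uSet q h0), X (uSet q h0),
        ∏ A ∈ Finset.univ.erase (uSet q h0), X A,
        huniv ▸ hXc z, huniv ▸ hXc z, ?_⟩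
      rw [← Finset.mul_prod_erase Finset.univ _ (Finset.mem_univ (uSet q h0))]
      ring
    · push_neg at hall
      obtain ⟨i, hi⟩ := hall
      refine ⟨X (c i), X (c z),
        (∏ A ∈ (Finset.univ.erase (c i)).erase (c z), X A) * X (uSet q h0),
        hXc i, hXc z, ?_⟩
      rw [← Finset.mul_prod_erase Finset.univ _ (Finset.mem_univ (c i)),
        ← Finset.mul_prod_erase _ _
          (Finset.mem_erase.mpr ⟨Ne.symm hi, Finset.mem_univ _⟩)]
      ring
  obtain ⟨a, b, rest, ha, hb, heq⟩ := main
  have h2 : a * b * extGen k q z ^ (r - 2) ∈ P ^ r := by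
    have hab : a * b ∈ P ^ 2 := by rw [sq]; exact Ideal.mul_mem_mul ha hb
    have hpow : extGen k q z ^ (r - 2) ∈ P ^ (r - 2) :=
      Ideal.pow_mem_pow (hle (Ideal.subset_span ⟨z, rfl⟩)) _
    have := Ideal.mul_mem_mul hab hpow
    rwa [← pow_add, show 2 + (r - 2) = r by omega] at this
  have hdec : hMon k q r h0 = rest * (a * b * extGen k q z ^ (r - 2)) := by
    rw [hMon]
    rw [show (⟨Finset.univ, ⟨⟨0, h0⟩, Finset.mem_univ _⟩⟩ : EIdx q) = uSet q h0 from rfl]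
    rw [heq]
    ring
  rw [hdec]
  exact Ideal.mul_mem_left _ _ h2


theorem stmt19 (k : Type*) [Field k] (q r : ℕ) (hq : 3 ≤ q) (hr : 2 ≤ r) :
    hMon k q r (by omega) ∈ symbPow (extIdeal k q) r ∧
    hMon k q r (by omega) ∉ (extIdeal k q) ^ r ∧
    (q = 3 →
      (hMon k q r (by omega)).totalDegree = 4 * r ∧
      ¬ ∃ nn : Fin q → ℕ, (∑ i, nn i) = r ∧
        hMon k q r (by omega) = ∏ i, extGen k q i ^ nn i) := by
  have h0 : 0 < q := by omega
  refine ⟨?_, ?_, ?_⟩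
  · simp only [symbPow, Submodule.mem_iInf]
    intro P hP
    exact hMon_mem_prime_pow k q r hr _ P hP.1.1 hP.1.2
  · intro hmem
    have hc : coeff (Dh q r (by omega)) (hMon k q r (by omega)) ≠ 0 := by
      rw [hMon_eq, coeff_monomial, if_pos rfl]
      exact one_ne_zero
    obtain ⟨n, hn, hnle⟩ := mem_pow_coeff k q r hmem hc
    exact comb q r hq hr _ n hn hnle
  · intro hq3
    subst hq3
    constructor
    · rw [hMon_eq, totalDegree_monomial _ one_ne_zero,
        Finsupp.sum_fintype _ _ (fun _ => rfl)]
      simp only [Dh_apply]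
      rw [Finset.sum_add_distrib, Finset.sum_add_distrib, ← Finset.mul_sum]
      have e1 : ∑ _A : EIdx 3, (1 : ℕ) = 7 := by decide
      have e2 : ∑ A : EIdx 3, (if A = uSet 3 (by omega) then 1 else 0) = 1 := by
        rw [Finset.sum_ite_eq' Finset.univ (uSet 3 (by omega)) (fun _ => 1)]
        simp
      have e3 : ∑ A : EIdx 3,
          (if (⟨0, Nat.succ_pos 2⟩ : Fin 3) ∈ A.1 then (1:ℕ) else 0) = 4 := by decide
      rw [e1, e2, e3]
      omega
    · rintro ⟨nn, hnn, heq⟩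
      rw [hMon_eq] at heq
      have hrhs : ∏ i, extGen k 3 i ^ nn i
          = monomial (∑ i, nn i • wt 3 i) (1 : k) := by
        rw [monomial_sum_one]
        refine Finset.prod_congr rfl fun i _ => ?_
        rw [extGen_eq, monomial_pow, one_pow]
      rw [hrhs] at heq
      have hDeq : Dh 3 r (by omega) = ∑ i, nn i • wt 3 i := by
        have h := congrArg (coeff (Dh 3 r (by omega))) heq
        rw [coeff_monomial, coeff_monomial, if_pos rfl] at h
        split_ifs at h with hcond
        · exact hcond.symm
        · exact absurd h one_ne_zero
      refine comb 3 r (le_refl 3) hr (by omega) nn hnn fun A => ?_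
      have : Dh 3 r (by omega) A = ∑ i ∈ A.1, nn i := by
        rw [hDeq, sumwt_apply]
      omega
end
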